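/- The minimum of Ω(PSL(2,7)) is 7: that is, 7 ∈ Ω(PSL(2,7)) and 7 ≤ m for every m ∈ Ω(PSL(2,7)). (Lemma 2.7, case q = 7, X = PSL(2,7)) -/

import Mathlib

/-- The projective special linear group `PSL(2,q)`: the quotient of `SL(2, ZMod q)`
by its center. -/
abbrev PSL (q : ℕ) : Type :=
  Matrix.SpecialLinearGroup (Fin 2) (ZMod q) ⧸
    Subgroup.center (Matrix.SpecialLinearGroup (Fin 2) (ZMod q))

/-- The projective general linear group `PGL(2,q)`: the quotient of `GL(2, ZMod q)`
by its center. -/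
abbrev PGL (q : ℕ) : Type :=
  Matrix.GeneralLinearGroup (Fin 2) (ZMod q) ⧸
    Subgroup.center (Matrix.GeneralLinearGroup (Fin 2) (ZMod q))

/-- The socle of `PGL(2,q)`: the image of `SL(2, ZMod q)` under the natural map
`SL(2, ZMod q) → GL(2, ZMod q) → PGL(2,q)`. -/
noncomputable def socPGL (q : ℕ) : Subgroup (PGL q) :=
  ((QuotientGroup.mk' (Subgroup.center (Matrix.GeneralLinearGroup (Fin 2) (ZMod q)))).comp
    (Matrix.SpecialLinearGroup.toGL)).range

/-- `Ω(PSL(2,q))`: odd natural numbers `m` such that `PSL(2,q)` has a subgroup of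
index `m` and every subgroup of index `m` is maximal. -/
def OmegaPSL (q : ℕ) : Set ℕ :=
  {m : ℕ | Odd m ∧ (∃ H : Subgroup (PSL q), H.index = m) ∧
    ∀ H : Subgroup (PSL q), H.index = m → IsCoatom H}

namespace MinOmegaAux

abbrev SL7 : Type := Matrix.SpecialLinearGroup (Fin 2) (ZMod 7)

instance : Fact (Nat.Prime 7) := ⟨by norm_num⟩
instance : Fact ((1 : ℕ) < 7) := ⟨by norm_num⟩

/-- A subgroup of prime index `7` is maximal. -/
lemma isCoatom_of_index_seven {G : Type*} [Group G] {H : Subgroup G}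
    (h : H.index = 7) : IsCoatom H := by
  constructor
  · rintro rfl
    rw [Subgroup.index_top] at h
    omega
  · intro K hK
    have hmul := Subgroup.relIndex_mul_index hK.le
    rw [h] at hmul
    have hdvd : K.index ∣ 7 := Dvd.intro_left _ hmul
    rcases (Nat.dvd_prime (by norm_num)).1 hdvd with h1 | h7
    · exact Subgroup.index_eq_one.mp h1
    · rw [h7] at hmul
      have : H.relIndex K = 1 := by omega
      exact absurd (Subgroup.relIndex_eq_one.mp this) hK.2

/-! ### Generation by elements of order dividing 7 -/

def TT (t : ZMod 7) : SL7 :=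
  ⟨!![1, t; 0, 1], by rw [Matrix.det_fin_two_of]; ring⟩

def LL (t : ZMod 7) : SL7 :=
  ⟨!![1, 0; t, 1], by rw [Matrix.det_fin_two_of]; ring⟩

lemma TT_mul (a b : ZMod 7) : TT a * TT b = TT (a + b) := by
  ext i j
  rw [Matrix.SpecialLinearGroup.coe_mul]
  fin_cases i <;> fin_cases j <;>
    simp [TT, Matrix.mul_apply, Fin.sum_univ_two, add_comm]

lemma LL_mul (a b : ZMod 7) : LL a * LL b = LL (a + b) := by
  ext i j
  rw [Matrix.SpecialLinearGroup.coe_mul]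
  fin_cases i <;> fin_cases j <;>
    simp [LL, Matrix.mul_apply, Fin.sum_univ_two, add_comm]

lemma TT_zero : TT 0 = 1 := by
  ext i j
  fin_cases i <;> fin_cases j <;> simp [TT]

lemma LL_zero : LL 0 = 1 := by
  ext i j
  fin_cases i <;> fin_cases j <;> simp [LL]

lemma TT_pow (t : ZMod 7) (n : ℕ) : TT t ^ n = TT (n * t) := by
  induction n with
  | zero => simp [TT_zero]
  | succ n ih =>
      rw [pow_succ, ih, TT_mul]
      congr 1
      push_cast
      ring

lemma LL_pow (t : ZMod 7) (n : ℕ) : LL t ^ n = LL (n * t) := by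
  induction n with
  | zero => simp [LL_zero]
  | succ n ih =>
      rw [pow_succ, ih, LL_mul]
      congr 1
      push_cast
      ring

lemma TT_pow_seven (t : ZMod 7) : TT t ^ 7 = 1 := by
  rw [TT_pow]
  have : ((7 : ℕ) : ZMod 7) = 0 := by decide
  rw [this, zero_mul, TT_zero]

lemma LL_pow_seven (t : ZMod 7) : LL t ^ 7 = 1 := by
  rw [LL_pow]
  have : ((7 : ℕ) : ZMod 7) = 0 := by decide
  rw [this, zero_mul, LL_zero]

/-- Every element of `SL(2,7)` is a product of four elements of order dividing 7. -/
lemma decomp (g : SL7) :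
    ∃ a b c d : SL7, a ^ 7 = 1 ∧ b ^ 7 = 1 ∧ c ^ 7 = 1 ∧ d ^ 7 = 1 ∧ a * b * c * d = g := by
  have hdet : g.1 0 0 * g.1 1 1 - g.1 0 1 * g.1 1 0 = 1 := by
    rw [← Matrix.det_fin_two]; exact g.2
  by_cases hc : g.1 1 0 = 0
  · have ha0 : g.1 0 0 ≠ 0 := by
      intro h
      rw [h, hc, zero_mul, mul_zero, sub_zero] at hdet
      exact absurd hdet (by decide)
    rw [hc, mul_zero, sub_zero] at hdet
    refine ⟨LL (-1), TT ((g.1 0 0 - 1) / (g.1 0 0)), LL (g.1 0 0),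
      TT ((g.1 0 1 + g.1 1 1 - 1) / (g.1 0 0)), LL_pow_seven _, TT_pow_seven _,
      LL_pow_seven _, TT_pow_seven _, ?_⟩
    ext i j
    simp only [Matrix.SpecialLinearGroup.coe_mul]
    fin_cases i <;> fin_cases j <;>
      simp [TT, LL, Matrix.mul_apply, Fin.sum_univ_two]
    all_goals field_simp
    all_goals try rw [hc]
    all_goals try linear_combination hdet
    all_goals try linear_combination -hdet
    all_goals ring
  · refine ⟨TT ((g.1 0 0 - 1) / (g.1 1 0)), LL (g.1 1 0),
      TT ((g.1 1 1 - 1) / (g.1 1 0)), 1, TT_pow_seven _, LL_pow_seven _,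
      TT_pow_seven _, one_pow 7, ?_⟩
    ext i j
    simp only [Matrix.SpecialLinearGroup.coe_mul]
    fin_cases i <;> fin_cases j <;>
      simp [TT, LL, Matrix.mul_apply, Fin.sum_univ_two]
    all_goals field_simp
    all_goals try linear_combination hdet
    all_goals ring

/-! ### Subgroups of small index are trivial -/

lemma eq_top_of_small_index (H : Subgroup (PSL 7)) {m : ℕ} (hH : H.index = m)
    (hm : ¬ (7 ∣ Nat.factorial m)) : H = ⊤ := by
  classical
  have key : ∀ x : PSL 7, x ^ 7 = 1 → x ∈ H := by
    intro x hx
    set φ := MulAction.toPermHom (PSL 7) (PSL 7 ⧸ H) with hφ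
    have h1 : φ x ^ 7 = 1 := by rw [← map_pow, hx, map_one]
    have h2 : orderOf (φ x) ∣ 7 := orderOf_dvd_of_pow_eq_one h1
    have hcard : Nat.card (Equiv.Perm (PSL 7 ⧸ H)) = Nat.factorial m := by
      have hfin : Fintype (PSL 7 ⧸ H) := Fintype.ofFinite _
      have hq : Nat.card (PSL 7 ⧸ H) = m := hH
      rw [Nat.card_eq_fintype_card, Fintype.card_perm, ← Nat.card_eq_fintype_card, hq]
    have h3 : orderOf (φ x) ∣ Nat.factorial m := hcard ▸ orderOf_dvd_natCard (φ x)
    have h4 : orderOf (φ x) = 1 := by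
      rcases (Nat.dvd_prime (by norm_num)).1 h2 with h | h
      · exact h
      · exact absurd (h ▸ h3) hm
    have h5 : φ x = 1 := orderOf_eq_one_iff.mp h4
    have h6 : x • ((1 : PSL 7) : PSL 7 ⧸ H) = ((1 : PSL 7) : PSL 7 ⧸ H) := by
      have := congrArg (fun (e : Equiv.Perm (PSL 7 ⧸ H)) => e ((1 : PSL 7) : PSL 7 ⧸ H)) h5
      simpa [hφ] using this
    rw [MulAction.Quotient.smul_coe, smul_eq_mul, mul_one] at h6
    have h7 : x⁻¹ * 1 ∈ H := QuotientGroup.eq.mp h6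
    rw [mul_one] at h7
    exact (inv_mem_iff).mp h7
  rw [Subgroup.eq_top_iff']
  intro y
  induction y using QuotientGroup.induction_on with
  | H g =>
    obtain ⟨a, b, c, d, ha, hb, hcc, hd, habcd⟩ := decomp g
    have hmk : ((g : SL7) : PSL 7) = ↑a * ↑b * ↑c * ↑d := by
      rw [← habcd]
      rfl
    rw [hmk]
    have mem : ∀ z : SL7, z ^ 7 = 1 → ((z : SL7) : PSL 7) ∈ H := by
      intro z hz
      apply key
      rw [← QuotientGroup.mk_pow, hz]
      rfl
    exact mul_mem (mul_mem (mul_mem (mem a ha) (mem b hb)) (mem c hcc)) (mem d hd)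

/-! ### The subgroup of order 48 -/

def L4n : List (ℕ × ℕ × ℕ × ℕ) :=
  [(0,1,6,0),
   (0,2,3,0),
   (0,3,2,0),
   (0,4,5,0),
   (0,5,4,0),
   (0,6,1,0),
   (1,0,0,1),
   (1,1,4,5),
   (1,2,2,5),
   (1,3,3,3),
   (1,4,1,5),
   (1,5,6,3),
   (1,6,5,3),
   (2,0,0,4),
   (2,1,4,6),
   (2,2,2,6),
   (2,3,3,5),
   (2,4,1,6),
   (2,5,6,5),
   (2,6,5,5),
   (3,0,0,5),
   (3,1,2,1),
   (3,2,1,1),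
   (3,3,6,4),
   (3,4,4,1),
   (3,5,5,4),
   (3,6,3,4),
   (4,0,0,2),
   (4,1,4,3),
   (4,2,2,3),
   (4,3,3,6),
   (4,4,1,3),
   (4,5,6,6),
   (4,6,5,6),
   (5,0,0,3),
   (5,1,2,2),
   (5,2,1,2),
   (5,3,6,1),
   (5,4,4,2),
   (5,5,5,1),
   (5,6,3,1),
   (6,0,0,6),
   (6,1,2,4),
   (6,2,1,4),
   (6,3,6,2),
   (6,4,4,4),
   (6,5,5,2),
   (6,6,3,2)]

def inK (g : SL7) : Prop :=
  ((g.1 0 0).val, (g.1 0 1).val, (g.1 1 0).val, (g.1 1 1).val) ∈ L4n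

set_option maxRecDepth 10000 in
lemma L4n_mul : ∀ t ∈ L4n, ∀ s ∈ L4n,
    ((t.1 * s.1 % 7 + t.2.1 * s.2.2.1 % 7) % 7, (t.1 * s.2.1 % 7 + t.2.1 * s.2.2.2 % 7) % 7,
     (t.2.2.1 * s.1 % 7 + t.2.2.2 * s.2.2.1 % 7) % 7,
     (t.2.2.1 * s.2.1 % 7 + t.2.2.2 * s.2.2.2 % 7) % 7) ∈ L4n := by decide

set_option maxRecDepth 10000 in
lemma L4n_inv : ∀ t ∈ L4n, (t.2.2.2, (7 - t.2.1) % 7, (7 - t.2.2.1) % 7, t.1) ∈ L4n := by decide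

lemma L4n_lt : ∀ t ∈ L4n, t.1 < 7 ∧ t.2.1 < 7 ∧ t.2.2.1 < 7 ∧ t.2.2.2 < 7 := by decide

lemma L4n_det : ∀ t ∈ L4n, (t.1 * t.2.2.2) % 7 = (t.2.1 * t.2.2.1 + 1) % 7 := by decide

lemma L4n_card : L4n.toFinset.card = 48 := by decide

lemma L4n_one : ((1 : ℕ), (0 : ℕ), (0 : ℕ), (1 : ℕ)) ∈ L4n := by decide

def K : Subgroup SL7 where
  carrier := {g | inK g}
  one_mem' := by
    show inK 1
    unfold inK
    have h00 : ((1 : SL7).1 0 0) = 1 := by simp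
    have h01 : ((1 : SL7).1 0 1) = 0 := by simp
    have h10 : ((1 : SL7).1 1 0) = 0 := by simp
    have h11 : ((1 : SL7).1 1 1) = 1 := by simp
    rw [h00, h01, h10, h11, ZMod.val_one, ZMod.val_zero]
    exact L4n_one
  mul_mem' := by
    intro a b ha hb
    show inK (a * b)
    unfold inK
    have e : ∀ i j : Fin 2, (((a * b).1) i j).val =
        ((a.1 i 0).val * (b.1 0 j).val % 7 + (a.1 i 1).val * (b.1 1 j).val % 7) % 7 := by
      intro i j
      have : ((a * b).1) i j = a.1 i 0 * b.1 0 j + a.1 i 1 * b.1 1 j := by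
        rw [Matrix.SpecialLinearGroup.coe_mul, Matrix.mul_apply, Fin.sum_univ_two]
      rw [this, ZMod.val_add, ZMod.val_mul, ZMod.val_mul]
    rw [e 0 0, e 0 1, e 1 0, e 1 1]
    exact L4n_mul _ ha _ hb
  inv_mem' := by
    intro a ha
    show inK a⁻¹
    unfold inK
    have hadj : (a⁻¹).1 = !![a.1 1 1, -a.1 0 1; -a.1 1 0, a.1 0 0] := by
      rw [Matrix.SpecialLinearGroup.coe_inv, Matrix.adjugate_fin_two]
    have h00 : (a⁻¹).1 0 0 = a.1 1 1 := by rw [hadj]; simp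
    have h01 : (a⁻¹).1 0 1 = -a.1 0 1 := by rw [hadj]; simp
    have h10 : (a⁻¹).1 1 0 = -a.1 1 0 := by rw [hadj]; simp
    have h11 : (a⁻¹).1 1 1 = a.1 0 0 := by rw [hadj]; simp
    rw [h00, h01, h10, h11, ZMod.neg_val', ZMod.neg_val']
    exact L4n_inv _ ha

lemma card_K : Nat.card K = 48 := by
  have e : K ≃ {t : ℕ × ℕ × ℕ × ℕ // t ∈ L4n.toFinset} :=
    { toFun := fun k => ⟨((k.1.1 0 0).val, (k.1.1 0 1).val, (k.1.1 1 0).val, (k.1.1 1 1).val),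
        List.mem_toFinset.mpr k.2⟩
      invFun := fun t => by
        refine ⟨⟨!![((t.1.1 : ℕ) : ZMod 7), ((t.1.2.1 : ℕ) : ZMod 7);
            ((t.1.2.2.1 : ℕ) : ZMod 7), ((t.1.2.2.2 : ℕ) : ZMod 7)], ?_⟩, ?_⟩
        · rw [Matrix.det_fin_two_of]
          have hd := L4n_det _ (List.mem_toFinset.mp t.2)
          have : ((t.1.1 * t.1.2.2.2 : ℕ) : ZMod 7) = ((t.1.2.1 * t.1.2.2.1 + 1 : ℕ) : ZMod 7) := by
            rw [← ZMod.natCast_mod _ 7, ← ZMod.natCast_mod (t.1.2.1 * t.1.2.2.1 + 1) 7, hd]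
          push_cast at this
          linear_combination this
        · show inK _
          unfold inK
          obtain ⟨l1, l2, l3, l4⟩ := L4n_lt _ (List.mem_toFinset.mp t.2)
          simpa [ZMod.val_natCast, Nat.mod_eq_of_lt, l1, l2, l3, l4] using
            List.mem_toFinset.mp t.2
      left_inv := by
        intro k
        apply Subtype.ext
        apply Subtype.ext
        apply Matrix.ext
        intro i j
        fin_cases i <;> fin_cases j <;> simp [ZMod.natCast_val, ZMod.cast_id]
      right_inv := by
        intro t
        apply Subtype.ext
        obtain ⟨l1, l2, l3, l4⟩ := L4n_lt _ (List.mem_toFinset.mp t.2)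
        simp [ZMod.val_natCast, Nat.mod_eq_of_lt, l1, l2, l3, l4] }
  rw [Nat.card_congr e, Nat.card_eq_fintype_card, Fintype.card_coe, L4n_card]

set_option maxRecDepth 10000 in
lemma card_SL7 : Nat.card SL7 = 336 := by
  rw [Nat.card_eq_fintype_card]
  decide

lemma index_K : K.index = 7 := by
  have h := Subgroup.card_mul_index K
  rw [card_K, card_SL7] at h
  omega

lemma center_le_K : Subgroup.center SL7 ≤ K := by
  intro x hx
  obtain ⟨r, hr, hsc⟩ := Matrix.SpecialLinearGroup.mem_center_iff.mp hx
  have hr2 : r * r = 1 := by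
    have : r ^ (2 : ℕ) = 1 := by simpa using hr
    rw [pow_two] at this
    exact this
  have hcases : r = 1 ∨ r = -1 :=
    (by decide : ∀ s : ZMod 7, s * s = 1 → s = 1 ∨ s = -1) r hr2
  have hx00 : x.1 0 0 = r := by rw [← hsc]; simp
  have hx01 : x.1 0 1 = 0 := by rw [← hsc]; simp [Matrix.scalar_apply, Matrix.diagonal_apply]
  have hx10 : x.1 1 0 = 0 := by rw [← hsc]; simp [Matrix.scalar_apply, Matrix.diagonal_apply]
  have hx11 : x.1 1 1 = r := by rw [← hsc]; simp
  show inK x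
  unfold inK
  rw [hx00, hx01, hx10, hx11, ZMod.val_zero]
  rcases hcases with h | h <;> rw [h]
  · rw [ZMod.val_one]
    exact L4n_one
  · have : ((-1 : ZMod 7)).val = 6 := by decide
    rw [this]
    decide

/-- The image of `K` in `PSL(2,7)`, a subgroup of index 7. -/
noncomputable def H0 : Subgroup (PSL 7) :=
  K.map (QuotientGroup.mk' (Subgroup.center SL7))

lemma index_H0 : H0.index = 7 := by
  unfold H0
  rw [Subgroup.index_map_eq _ (QuotientGroup.mk'_surjective _)
    (by rw [QuotientGroup.ker_mk']; exact center_le_K)]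
  exact index_K

end MinOmegaAux

/-- Lemma 2.7, case `X = PSL(2,7)`. -/
theorem min_OmegaPSL_7 :
    (7 : ℕ) ∈ OmegaPSL 7 ∧ ∀ m ∈ OmegaPSL 7, (7 : ℕ) ≤ m := by
  constructor
  · refine ⟨⟨3, by norm_num⟩, ⟨MinOmegaAux.H0, MinOmegaAux.index_H0⟩, fun H hH =>
      MinOmegaAux.isCoatom_of_index_seven hH⟩
  · rintro m ⟨hodd, ⟨H, hH⟩, hmax⟩
    by_contra hlt
    push_neg at hlt
    interval_cases m
    · simp [Nat.odd_iff] at hodd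
    · exact (hmax H hH).1 (Subgroup.index_eq_one.mp hH)
    · simp [Nat.odd_iff] at hodd
    · have := MinOmegaAux.eq_top_of_small_index H hH (by decide)
      rw [this, Subgroup.index_top] at hH
      omega
    · simp [Nat.odd_iff] at hodd
    · have := MinOmegaAux.eq_top_of_small_index H hH (by decide)
      rw [this, Subgroup.index_top] at hH
      omega
    · simp [Nat.odd_iff] at hodd
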